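/- Let D = diag(d₁,…,d_k) be a diagonal matrix and g ~ N(0, I_k). Then E‖Dg‖₂ ≥ sqrt(‖d‖₂² - ‖d‖_∞²), where ‖d‖₂² = Σᵢ dᵢ² and ‖d‖_∞ = maxᵢ |dᵢ|. -/

import Mathlib

open MeasureTheory ProbabilityTheory

open Filter Set

noncomputable section

private def pdf1 (x : ℝ) : ℝ := (Real.sqrt (2 * Real.pi))⁻¹ * Real.exp (-(2⁻¹) * x ^ 2)

private lemma pdf1_eq (x : ℝ) : gaussianPDFReal 0 1 x = pdf1 x := by
  simp only [gaussianPDFReal_def, pdf1, NNReal.coe_one, mul_one, sub_zero]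
  congr 1
  ring

private lemma pdf1_nonneg (x : ℝ) : 0 ≤ pdf1 x := by
  have := gaussianPDFReal_nonneg 0 1 x
  rwa [pdf1_eq] at this

private lemma pdf1_continuous : Continuous pdf1 := by
  unfold pdf1; fun_prop

private lemma gauss_eq_withDensity :
    (gaussianReal 0 1 : Measure ℝ)
      = (volume : Measure ℝ).withDensity fun x => ((gaussianPDFReal 0 1 x).toNNReal : ENNReal) := by
  rw [gaussianReal_of_var_ne_zero _ one_ne_zero]
  rfl

private lemma integral_gauss (f : ℝ → ℝ) :
    ∫ x, f x ∂(gaussianReal 0 1) = ∫ x, pdf1 x * f x := by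
  rw [gauss_eq_withDensity, integral_withDensity_eq_integral_smul
    ((measurable_gaussianPDFReal 0 1).real_toNNReal) f]
  congr 1; ext x
  rw [NNReal.smul_def, Real.coe_toNNReal _ (gaussianPDFReal_nonneg 0 1 x), pdf1_eq]
  rfl

private lemma integrable_gauss (f : ℝ → ℝ)
    (hi : Integrable (fun x => f x * pdf1 x) volume) :
    Integrable f (gaussianReal 0 1) := by
  rw [gauss_eq_withDensity]
  rw [integrable_withDensity_iff ((measurable_gaussianPDFReal 0 1).real_toNNReal.coe_nnreal_ennreal)
    (Eventually.of_forall fun x => ENNReal.coe_lt_top)]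
  refine hi.congr (Eventually.of_forall fun x => ?_)
  simp only [ENNReal.coe_toReal, Real.coe_toNNReal _ (gaussianPDFReal_nonneg 0 1 x), pdf1_eq]
  rw [Real.coe_toNNReal _ (pdf1_nonneg x)]

private lemma integrable_pdf1 : Integrable pdf1 volume :=
  (integrable_exp_neg_mul_sq (by norm_num : (0:ℝ) < 2⁻¹)).const_mul _

private lemma integrable_abs_mul_pdf1 : Integrable (fun x => |x| * pdf1 x) volume := by
  have h := (integrable_mul_exp_neg_mul_sq (by norm_num : (0:ℝ) < 2⁻¹)).abs.const_mul
    ((Real.sqrt (2 * Real.pi))⁻¹)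
  refine h.congr (Eventually.of_forall fun x => ?_)
  unfold pdf1
  simp only [pdf1]
  rw [abs_mul, abs_of_nonneg (Real.exp_nonneg _)]
  ring

private lemma ibp_1d {l c : ℝ} (hl : 0 ≤ l) (hc : 0 < c) :
    ∫ x, l * x ^ 2 / Real.sqrt (c + l * x ^ 2) ∂(gaussianReal 0 1)
      = ∫ x, l * c / ((c + l * x ^ 2) * Real.sqrt (c + l * x ^ 2)) ∂(gaussianReal 0 1) := by
  set u : ℝ → ℝ := fun x => c + l * x ^ 2 with hu_def
  have hu : ∀ x, 0 < u x := fun x => add_pos_of_pos_of_nonneg hc (mul_nonneg hl (sq_nonneg x))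
  have hs : ∀ x, 0 < Real.sqrt (u x) := fun x => Real.sqrt_pos.2 (hu x)
  set ψ : ℝ → ℝ := fun x => l * x / Real.sqrt (u x) with hψ_def
  set ψ' : ℝ → ℝ := fun x => l * c / (u x * Real.sqrt (u x)) with hψ'_def
  have hucont : Continuous u := by fun_prop
  have hψcont : Continuous ψ := by
    apply Continuous.div (by fun_prop) (Real.continuous_sqrt.comp hucont)
    exact fun x => ne_of_gt (hs x)
  have hψ'cont : Continuous ψ' := by
    apply Continuous.div continuous_const
      (hucont.mul (Real.continuous_sqrt.comp hucont))
    exact fun x => ne_of_gt (mul_pos (hu x) (hs x))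
  have hderiv : ∀ x, HasDerivAt ψ (ψ' x) x := by
    intro x
    have hu' : HasDerivAt (fun y : ℝ => c + l * y ^ 2) (l * (2 * x)) x := by
      simpa using ((hasDerivAt_pow 2 x).const_mul l).const_add c
    have hsq : HasDerivAt (fun y : ℝ => Real.sqrt (u y)) (l * (2 * x) / (2 * Real.sqrt (u x))) x :=
      hu'.sqrt (ne_of_gt (hu x))
    have hnum : HasDerivAt (fun y : ℝ => l * y) l x := by
      simpa using (hasDerivAt_id x).const_mul l
    have h := hnum.div hsq (ne_of_gt (hs x))
    convert h using 1
    case e'_4 => rfl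
    case e'_5 => rfl
    case e'_8 => rfl
    have hs2 : Real.sqrt (u x) ^ 2 = u x := Real.sq_sqrt (hu x).le
    have hsne : Real.sqrt (u x) ≠ 0 := ne_of_gt (hs x)
    have hune : u x ≠ 0 := ne_of_gt (hu x)
    rw [hψ'_def]
    simp only [hu_def]
    have hs2 : Real.sqrt (c + l * x ^ 2) ^ 2 = c + l * x ^ 2 := Real.sq_sqrt (hu x).le
    have hsne : Real.sqrt (c + l * x ^ 2) ≠ 0 := ne_of_gt (hs x)
    field_simp
    first
    | linear_combination (-(2 * l * Real.sqrt (c + l * x ^ 2) * (c + l * x ^ 2))) * hs2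
    | linear_combination (2 * l * Real.sqrt (c + l * x ^ 2) * (c + l * x ^ 2)) * hs2
    | linear_combination (-(2 * l * Real.sqrt (c + l * x ^ 2) * (c + l * x ^ 2) ^ 2)) * hs2
    | linear_combination (2 * l * Real.sqrt (c + l * x ^ 2) * (c + l * x ^ 2) ^ 2) * hs2
    | linear_combination (2 * l * (c + l * x ^ 2) * (l * c + l ^ 2 * x ^ 2)) * hs2
    | linear_combination (-(2 * l * (c + l * x ^ 2) * (l * c + l ^ 2 * x ^ 2))) * hs2
    | linear_combination (2 * Real.sqrt (c + l * x ^ 2) * (l * c + l ^ 2 * x ^ 2)) * hs2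
    | linear_combination (-(2 * Real.sqrt (c + l * x ^ 2) * (l * c + l ^ 2 * x ^ 2))) * hs2
    | linear_combination (-(l ^ 2 * x ^ 2)) * hs2
  have hψle : ∀ x, |ψ x| ≤ Real.sqrt l := by
    intro x
    rw [hψ_def]
    rw [abs_div, abs_of_nonneg (Real.sqrt_nonneg _), div_le_iff₀ (hs x), ← Real.sqrt_mul hl]
    rw [← Real.sqrt_sq (abs_nonneg (l * x))]
    apply Real.sqrt_le_sqrt
    rw [sq_abs]
    simp only [hu_def]
    nlinarith [sq_nonneg x, mul_nonneg hl hc.le]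
  have hψ'le : ∀ x, |ψ' x| ≤ l / Real.sqrt c := by
    intro x
    rw [hψ'_def, abs_of_nonneg (by positivity)]
    rw [div_le_div_iff₀ (by positivity) (Real.sqrt_pos.2 hc)]
    have h1 : c ≤ u x := le_add_of_nonneg_right (mul_nonneg hl (sq_nonneg x))
    have h2 : Real.sqrt c ≤ Real.sqrt (u x) := Real.sqrt_le_sqrt h1
    have h3 : (0:ℝ) ≤ Real.sqrt c := Real.sqrt_nonneg c
    nlinarith [hs x, mul_le_mul h1 h2 h3 (hu x).le]
  have hpdfderiv : ∀ x, HasDerivAt pdf1 (-x * pdf1 x) x := by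
    intro x
    have h : HasDerivAt (fun y : ℝ => -(2⁻¹ : ℝ) * y ^ 2) (-(2⁻¹ : ℝ) * (2 * x)) x := by
      simpa using (hasDerivAt_pow 2 x).const_mul (-(2⁻¹ : ℝ))
    have h2 := (h.exp).const_mul ((Real.sqrt (2 * Real.pi))⁻¹)
    convert h2 using 1
    case e'_4 => rfl
    case e'_5 => rfl
    case e'_8 => rfl
    simp only [pdf1]
    ring
  set W : ℝ → ℝ := fun x => ψ x * pdf1 x with hW_def
  set G : ℝ → ℝ := fun x => (ψ' x - x * ψ x) * pdf1 x with hG_def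
  have hW : ∀ x, HasDerivAt W (G x) x := by
    intro x
    have h := (hderiv x).mul (hpdfderiv x)
    convert h using 1
    case e'_4 => rfl
    case e'_5 => rfl
    case e'_8 => rfl
    show (ψ' x - x * ψ x) * pdf1 x = _
    ring
  have hGint : Integrable G volume := by
    apply Integrable.mono'
      (g := fun x => (l / Real.sqrt c) * pdf1 x + Real.sqrt l * (|x| * pdf1 x))
      ((integrable_pdf1.const_mul _).add (integrable_abs_mul_pdf1.const_mul _))
      (((hψ'cont.sub (continuous_id.mul hψcont)).mul pdf1_continuous).aestronglyMeasurable)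
    refine Eventually.of_forall fun x => ?_
    show ‖(ψ' x - x * ψ x) * pdf1 x‖ ≤ _
    rw [Real.norm_eq_abs, abs_mul, abs_of_nonneg (pdf1_nonneg x)]
    have h1 : |ψ' x - x * ψ x| ≤ l / Real.sqrt c + |x| * Real.sqrt l := by
      refine (abs_sub _ _).trans ?_
      rw [abs_mul]
      exact add_le_add (hψ'le x) (mul_le_mul_of_nonneg_left (hψle x) (abs_nonneg x))
    nlinarith [pdf1_nonneg x, abs_nonneg (ψ' x - x * ψ x)]
  have hpdftop : Tendsto pdf1 atTop (nhds 0) := by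
    have h2t : Tendsto (fun x : ℝ => x ^ 2) atTop atTop := tendsto_pow_atTop two_ne_zero
    have hb : Tendsto (fun x : ℝ => -(2⁻¹ : ℝ) * x ^ 2) atTop atBot :=
      h2t.const_mul_atTop_of_neg (by norm_num)
    have he := Real.tendsto_exp_atBot.comp hb
    have h3 := he.const_mul ((Real.sqrt (2 * Real.pi))⁻¹)
    have hgoal : Tendsto (fun x : ℝ => (Real.sqrt (2 * Real.pi))⁻¹ * Real.exp (-(2⁻¹:ℝ) * x ^ 2))
        atTop (nhds 0) := by simpa only [Function.comp_def, mul_zero] using h3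
    exact hgoal
  have hpdfbot : Tendsto pdf1 atBot (nhds 0) := by
    have h2t : Tendsto (fun x : ℝ => x ^ 2) atBot atTop := by
      have h := (tendsto_pow_atTop (two_ne_zero)).comp (tendsto_neg_atBot_atTop (G := ℝ))
      simpa only [Function.comp_def, neg_sq] using h
    have hb : Tendsto (fun x : ℝ => -(2⁻¹ : ℝ) * x ^ 2) atBot atBot :=
      h2t.const_mul_atTop_of_neg (by norm_num)
    have he := Real.tendsto_exp_atBot.comp hb
    have h3 := he.const_mul ((Real.sqrt (2 * Real.pi))⁻¹)
    have hgoal : Tendsto (fun x : ℝ => (Real.sqrt (2 * Real.pi))⁻¹ * Real.exp (-(2⁻¹:ℝ) * x ^ 2))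
        atBot (nhds 0) := by simpa only [Function.comp_def, mul_zero] using h3
    exact hgoal
  have hWbound : ∀ x, ‖W x‖ ≤ Real.sqrt l * pdf1 x := by
    intro x
    show ‖ψ x * pdf1 x‖ ≤ _
    rw [Real.norm_eq_abs, abs_mul, abs_of_nonneg (pdf1_nonneg x)]
    exact mul_le_mul_of_nonneg_right (hψle x) (pdf1_nonneg x)
  have hWtop : Tendsto W atTop (nhds 0) := by
    apply squeeze_zero_norm hWbound
    simpa using hpdftop.const_mul (Real.sqrt l)
  have hWbot : Tendsto W atBot (nhds 0) := by
    apply squeeze_zero_norm hWbound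
    simpa using hpdfbot.const_mul (Real.sqrt l)
  have hIoi : ∫ x in Set.Ioi (0:ℝ), G x = 0 - W 0 :=
    integral_Ioi_of_hasDerivAt_of_tendsto' (fun x _ => hW x) hGint.integrableOn hWtop
  have hIic : ∫ x in Set.Iic (0:ℝ), G x = W 0 - 0 :=
    integral_Iic_of_hasDerivAt_of_tendsto (hW 0).continuousAt.continuousWithinAt
      (fun x _ => hW x) hGint.integrableOn hWbot
  have htot : ∫ x, G x = 0 := by
    have h := integral_add_compl (measurableSet_Iic (a := (0:ℝ))) hGint
    rw [compl_Iic] at h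
    rw [← h, hIoi, hIic]
    ring
  have hint2 : Integrable (fun x => ψ' x * pdf1 x) volume := by
    apply Integrable.mono' (g := fun x => (l / Real.sqrt c) * pdf1 x)
      (integrable_pdf1.const_mul _)
      ((hψ'cont.mul pdf1_continuous).aestronglyMeasurable)
    refine Eventually.of_forall fun x => ?_
    rw [Real.norm_eq_abs, Pi.mul_apply, abs_mul, abs_of_nonneg (pdf1_nonneg x)]
    exact mul_le_mul_of_nonneg_right (hψ'le x) (pdf1_nonneg x)
  have hint1 : Integrable (fun x => (x * ψ x) * pdf1 x) volume := by
    apply Integrable.mono' (g := fun x => Real.sqrt l * (|x| * pdf1 x))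
      (integrable_abs_mul_pdf1.const_mul _)
      (((continuous_id.mul hψcont).mul pdf1_continuous).aestronglyMeasurable)
    refine Eventually.of_forall fun x => ?_
    show ‖(x * ψ x) * pdf1 x‖ ≤ _
    rw [Real.norm_eq_abs, abs_mul, abs_of_nonneg (pdf1_nonneg x), abs_mul]
    have := mul_le_mul_of_nonneg_left (hψle x) (abs_nonneg x)
    nlinarith [pdf1_nonneg x]
  have hsplit : ∫ x, G x = (∫ x, ψ' x * pdf1 x) - ∫ x, (x * ψ x) * pdf1 x := by
    rw [← integral_sub hint2 hint1]
    congr 1; ext x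
    show (ψ' x - x * ψ x) * pdf1 x = _
    ring
  have hkey : ∫ x, (x * ψ x) * pdf1 x = ∫ x, ψ' x * pdf1 x := by
    have := hsplit.symm.trans htot
    linarith
  rw [integral_gauss, integral_gauss]
  calc ∫ x, pdf1 x * (l * x ^ 2 / Real.sqrt (c + l * x ^ 2))
      = ∫ x, (x * ψ x) * pdf1 x := by
        congr 1; ext x; rw [hψ_def]; simp only [hu_def]; ring
    _ = ∫ x, ψ' x * pdf1 x := hkey
    _ = ∫ x, pdf1 x * (l * c / ((c + l * x ^ 2) * Real.sqrt (c + l * x ^ 2))) := by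
        congr 1; ext x; rw [hψ'_def]; simp only [hu_def]; ring

private lemma ibp_coord {n : ℕ} (d : Fin (n+1) → ℝ) {ε : ℝ} (hε : 0 < ε) (i : Fin (n+1))
    (h₁ : Integrable (fun g : Fin (n+1) → ℝ =>
        (d i)^2 * (g i)^2 / Real.sqrt (ε + ∑ j, (d j * g j)^2))
      (Measure.pi fun _ => gaussianReal 0 1))
    (h₂ : Integrable (fun g : Fin (n+1) → ℝ =>
        (d i)^2 * ((ε + ∑ j, (d j * g j)^2) - (d i)^2 * (g i)^2)
          / ((ε + ∑ j, (d j * g j)^2) * Real.sqrt (ε + ∑ j, (d j * g j)^2)))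
      (Measure.pi fun _ => gaussianReal 0 1)) :
    ∫ g : Fin (n+1) → ℝ, (d i)^2 * (g i)^2 / Real.sqrt (ε + ∑ j, (d j * g j)^2)
        ∂(Measure.pi fun _ => gaussianReal 0 1)
      = ∫ g : Fin (n+1) → ℝ, (d i)^2 * ((ε + ∑ j, (d j * g j)^2) - (d i)^2 * (g i)^2)
          / ((ε + ∑ j, (d j * g j)^2) * Real.sqrt (ε + ∑ j, (d j * g j)^2))
        ∂(Measure.pi fun _ => gaussianReal 0 1) := by
  set F₁ : (Fin (n+1) → ℝ) → ℝ := fun g =>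
    (d i)^2 * (g i)^2 / Real.sqrt (ε + ∑ j, (d j * g j)^2) with hF₁_def
  set F₂ : (Fin (n+1) → ℝ) → ℝ := fun g =>
    (d i)^2 * ((ε + ∑ j, (d j * g j)^2) - (d i)^2 * (g i)^2)
      / ((ε + ∑ j, (d j * g j)^2) * Real.sqrt (ε + ∑ j, (d j * g j)^2)) with hF₂_def
  set e := MeasurableEquiv.piFinSuccAbove (fun _ : Fin (n+1) => ℝ) i with he_def
  have mp := measurePreserving_piFinSuccAbove (fun _ : Fin (n+1) => gaussianReal 0 1) i
  have transfer : ∀ F : (Fin (n+1) → ℝ) → ℝ,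
      ∫ g, F g ∂(Measure.pi fun _ => gaussianReal 0 1)
        = ∫ z : ℝ × (Fin n → ℝ), F (e.symm z)
            ∂((gaussianReal 0 1).prod (Measure.pi fun _ => gaussianReal 0 1)) := by
    intro F
    rw [← mp.integral_comp e.measurableEmbedding (fun z => F (e.symm z))]
    congr 1; ext g; rw [e.symm_apply_apply]
  have htrans : ∀ F : (Fin (n+1) → ℝ) → ℝ, Integrable F (Measure.pi fun _ => gaussianReal 0 1) →
      Integrable (fun z : ℝ × (Fin n → ℝ) => F (e.symm z))
        ((gaussianReal 0 1).prod (Measure.pi fun _ => gaussianReal 0 1)) := by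
    intro F hF
    rw [← mp.integrable_comp_emb e.measurableEmbedding]
    refine hF.congr (Filter.Eventually.of_forall fun g => ?_)
    rw [Function.comp_apply, e.symm_apply_apply]
  have hsymm : ∀ (x : ℝ) (y : Fin n → ℝ), e.symm (x, y) = i.insertNth x y := fun x y => rfl
  have hsum : ∀ (x : ℝ) (y : Fin n → ℝ),
      (ε + ∑ j, (d j * (e.symm (x, y)) j)^2)
        = (ε + ∑ j : Fin n, (d (i.succAbove j) * y j)^2) + (d i)^2 * x^2 := by
    intro x y
    rw [hsymm,
      Fin.sum_univ_succAbove (fun j => (d j * (Fin.insertNth (α := fun _ => ℝ) i x y) j)^2) i]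
    simp only [Fin.insertNth_apply_same, Fin.insertNth_apply_succAbove]
    ring
  have happi : ∀ (x : ℝ) (y : Fin n → ℝ), (e.symm (x, y)) i = x := by
    intro x y; rw [hsymm, Fin.insertNth_apply_same]
  rw [transfer F₁, transfer F₂,
    integral_prod_symm _ (htrans F₁ h₁), integral_prod_symm _ (htrans F₂ h₂)]
  apply integral_congr_ae
  refine Filter.Eventually.of_forall fun y => ?_
  have hc : (0:ℝ) < ε + ∑ j : Fin n, (d (i.succAbove j) * y j)^2 :=
    add_pos_of_pos_of_nonneg hε (Finset.sum_nonneg fun j _ => sq_nonneg _)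
  calc ∫ x, F₁ (e.symm (x, y)) ∂(gaussianReal 0 1)
      = ∫ x, (d i)^2 * x^2
          / Real.sqrt ((ε + ∑ j : Fin n, (d (i.succAbove j) * y j)^2) + (d i)^2 * x^2)
          ∂(gaussianReal 0 1) := by
        apply integral_congr_ae
        refine Filter.Eventually.of_forall fun x => ?_
        rw [hF₁_def]
        simp only []
        rw [hsum, happi]
    _ = ∫ x, (d i)^2 * (ε + ∑ j : Fin n, (d (i.succAbove j) * y j)^2)
          / (((ε + ∑ j : Fin n, (d (i.succAbove j) * y j)^2) + (d i)^2 * x^2)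
            * Real.sqrt ((ε + ∑ j : Fin n, (d (i.succAbove j) * y j)^2) + (d i)^2 * x^2))
          ∂(gaussianReal 0 1) := by
        exact ibp_1d (sq_nonneg (d i)) hc
    _ = ∫ x, F₂ (e.symm (x, y)) ∂(gaussianReal 0 1) := by
        apply integral_congr_ae
        refine Filter.Eventually.of_forall fun x => ?_
        rw [hF₂_def]
        simp only []
        rw [hsum, happi]
        simp only [mul_pow]
        ring_nf

private lemma integrable_abs_gauss : Integrable (fun x : ℝ => |x|) (gaussianReal 0 1) :=
  integrable_gauss _ integrable_abs_mul_pdf1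

private lemma integrable_abs_eval {n : ℕ} (i : Fin (n+1)) :
    Integrable (fun g : Fin (n+1) → ℝ => |g i|) (Measure.pi fun _ => gaussianReal 0 1) := by
  set e := MeasurableEquiv.piFinSuccAbove (fun _ : Fin (n+1) => ℝ) i with he_def
  have mp := measurePreserving_piFinSuccAbove (fun _ : Fin (n+1) => gaussianReal 0 1) i
  have hprod : Integrable (fun z : ℝ × (Fin n → ℝ) => |z.1|)
      ((gaussianReal 0 1).prod (Measure.pi fun _ => gaussianReal 0 1)) := by
    rw [integrable_prod_iff (f := fun z : ℝ × (Fin n → ℝ) => |z.1|)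
      (continuous_fst.abs.aestronglyMeasurable)]
    constructor
    · refine Filter.Eventually.of_forall fun x => ?_
      exact (integrable_const (|x|)).congr (Filter.Eventually.of_forall fun y => rfl)
    · have : (fun x : ℝ => ∫ _ : Fin n → ℝ, ‖|x|‖ ∂(Measure.pi fun _ => gaussianReal 0 1))
          = fun x : ℝ => |x| := by
        ext x
        rw [integral_const]
        simp [measure_univ]
      rw [this]
      exact integrable_abs_gauss
  have h2 := (mp.integrable_comp_emb e.measurableEmbedding).2 hprod
  refine h2.congr (Filter.Eventually.of_forall fun g => ?_)
  rfl

private lemma integrable_rho {n : ℕ} (d : Fin (n+1) → ℝ) {ε : ℝ} (hε : 0 ≤ ε) :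
    Integrable (fun g : Fin (n+1) → ℝ => Real.sqrt (ε + ∑ i, (d i * g i)^2))
      (Measure.pi fun _ => gaussianReal 0 1) := by
  have hbound : Integrable (fun g : Fin (n+1) → ℝ => Real.sqrt ε + ∑ i, |d i| * |g i|)
      (Measure.pi fun _ => gaussianReal 0 1) :=
    (integrable_const _).add
      (integrable_finset_sum _ fun i _ => (integrable_abs_eval i).const_mul _)
  refine hbound.mono' (Continuous.aestronglyMeasurable (by fun_prop)) ?_
  refine Filter.Eventually.of_forall fun g => ?_
  rw [Real.norm_eq_abs, abs_of_nonneg (Real.sqrt_nonneg _)]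
  have h3 : (0:ℝ) ≤ ∑ i, |d i| * |g i| :=
    Finset.sum_nonneg fun i _ => mul_nonneg (abs_nonneg _) (abs_nonneg _)
  have h2 : ∑ i, (d i * g i)^2 ≤ (∑ i, |d i| * |g i|)^2 := by
    calc ∑ i, (d i * g i)^2 = ∑ i, (|d i| * |g i|)^2 := by
          apply Finset.sum_congr rfl
          intro j _
          rw [← abs_mul, sq_abs]
      _ ≤ (∑ i, |d i| * |g i|)^2 :=
          Finset.sum_sq_le_sq_sum_of_nonneg fun i _ => mul_nonneg (abs_nonneg _) (abs_nonneg _)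
  have h1 : ε + ∑ i, (d i * g i)^2 ≤ (Real.sqrt ε + ∑ i, |d i| * |g i|)^2 := by
    nlinarith [Real.sq_sqrt hε, Real.sqrt_nonneg ε]
  calc Real.sqrt (ε + ∑ i, (d i * g i)^2)
      ≤ Real.sqrt ((Real.sqrt ε + ∑ i, |d i| * |g i|)^2) := Real.sqrt_le_sqrt h1
    _ = Real.sqrt ε + ∑ i, |d i| * |g i| :=
        Real.sqrt_sq (by positivity)

set_option maxHeartbeats 2000000 in
private lemma key {n : ℕ} (d : Fin (n+1) → ℝ) {ε M : ℝ} (hε : 0 < ε)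
    (hM : ∀ i, d i ^ 2 ≤ M) :
    Real.sqrt ((∑ i, d i ^ 2) - M)
      ≤ ∫ g : Fin (n+1) → ℝ, Real.sqrt (ε + ∑ i, (d i * g i)^2)
          ∂(Measure.pi fun _ => gaussianReal 0 1) := by
  have hM0 : 0 ≤ M := le_trans (sq_nonneg (d 0)) (hM 0)
  have hsum_nonneg : ∀ g : Fin (n+1) → ℝ, 0 ≤ ∑ i, (d i * g i)^2 :=
    fun g => Finset.sum_nonneg fun i _ => sq_nonneg _
  have hu_pos : ∀ g : Fin (n+1) → ℝ, 0 < ε + ∑ i, (d i * g i)^2 :=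
    fun g => add_pos_of_pos_of_nonneg hε (hsum_nonneg g)
  have hρ_pos : ∀ g : Fin (n+1) → ℝ, 0 < Real.sqrt (ε + ∑ i, (d i * g i)^2) :=
    fun g => Real.sqrt_pos.2 (hu_pos g)
  have hρ_sq : ∀ g : Fin (n+1) → ℝ,
      Real.sqrt (ε + ∑ i, (d i * g i)^2) ^ 2 = ε + ∑ i, (d i * g i)^2 :=
    fun g => Real.sq_sqrt (hu_pos g).le
  have hsqe_ρ : ∀ g : Fin (n+1) → ℝ, Real.sqrt ε ≤ Real.sqrt (ε + ∑ i, (d i * g i)^2) :=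
    fun g => Real.sqrt_le_sqrt (le_add_of_nonneg_right (hsum_nonneg g))
  have hu_cont : Continuous (fun g : Fin (n+1) → ℝ => ε + ∑ i, (d i * g i)^2) := by
    apply continuous_const.add
    apply continuous_finset_sum
    intro i _
    exact ((continuous_const.mul (continuous_apply i)).pow 2)
  have hρ_cont : Continuous (fun g : Fin (n+1) → ℝ => Real.sqrt (ε + ∑ i, (d i * g i)^2)) :=
    Real.continuous_sqrt.comp hu_cont
  have hρ_int : Integrable (fun g : Fin (n+1) → ℝ => Real.sqrt (ε + ∑ i, (d i * g i)^2))
      (Measure.pi fun _ => gaussianReal 0 1) := integrable_rho d hε.le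
  have hinv_cont : Continuous (fun g : Fin (n+1) → ℝ =>
      (Real.sqrt (ε + ∑ i, (d i * g i)^2))⁻¹) :=
    hρ_cont.inv₀ fun g => ne_of_gt (hρ_pos g)
  have hinv_int : Integrable (fun g : Fin (n+1) → ℝ =>
      (Real.sqrt (ε + ∑ i, (d i * g i)^2))⁻¹) (Measure.pi fun _ => gaussianReal 0 1) := by
    refine (integrable_const ((Real.sqrt ε)⁻¹)).mono' hinv_cont.aestronglyMeasurable ?_
    refine Filter.Eventually.of_forall fun g => ?_
    rw [Real.norm_eq_abs, abs_of_nonneg (inv_nonneg.2 (hρ_pos g).le)]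
    exact inv_anti₀ (Real.sqrt_pos.2 hε) (hsqe_ρ g)
  have hf₁_int : ∀ i : Fin (n+1), Integrable (fun g : Fin (n+1) → ℝ =>
      (d i)^2 * (g i)^2 / Real.sqrt (ε + ∑ j, (d j * g j)^2))
      (Measure.pi fun _ => gaussianReal 0 1) := by
    intro i
    refine hρ_int.mono' (Continuous.aestronglyMeasurable ?_) ?_
    · exact (continuous_const.mul ((continuous_apply i).pow 2)).div hρ_cont
        fun g => ne_of_gt (hρ_pos g)
    refine Filter.Eventually.of_forall fun g => ?_
    rw [Real.norm_eq_abs, abs_of_nonneg (by positivity)]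
    rw [div_le_iff₀ (hρ_pos g)]
    have h1 : (d i)^2 * (g i)^2 = (d i * g i)^2 := by ring
    have h2 : (d i * g i)^2 ≤ ∑ j, (d j * g j)^2 :=
      Finset.single_le_sum (f := fun j => (d j * g j)^2) (fun j _ => sq_nonneg _)
        (Finset.mem_univ i)
    have h3 := hρ_sq g
    nlinarith [hρ_pos g, hε]
  have hf₂_int : ∀ i : Fin (n+1), Integrable (fun g : Fin (n+1) → ℝ =>
      (d i)^2 * ((ε + ∑ j, (d j * g j)^2) - (d i)^2 * (g i)^2)
        / ((ε + ∑ j, (d j * g j)^2) * Real.sqrt (ε + ∑ j, (d j * g j)^2)))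
      (Measure.pi fun _ => gaussianReal 0 1) := by
    intro i
    refine (integrable_const ((d i)^2 * (Real.sqrt ε)⁻¹)).mono'
      (Continuous.aestronglyMeasurable ?_) ?_
    · exact (continuous_const.mul (hu_cont.sub
        (continuous_const.mul ((continuous_apply i).pow 2)))).div
        (hu_cont.mul hρ_cont) fun g => ne_of_gt (mul_pos (hu_pos g) (hρ_pos g))
    refine Filter.Eventually.of_forall fun g => ?_
    have h1 : (d i)^2 * (g i)^2 = (d i * g i)^2 := by ring
    have h2 : (d i * g i)^2 ≤ ∑ j, (d j * g j)^2 :=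
      Finset.single_le_sum (f := fun j => (d j * g j)^2) (fun j _ => sq_nonneg _)
        (Finset.mem_univ i)
    have hnum_nonneg : 0 ≤ (ε + ∑ j, (d j * g j)^2) - (d i)^2 * (g i)^2 := by nlinarith
    rw [Real.norm_eq_abs, abs_of_nonneg (by positivity)]
    rw [div_le_iff₀ (mul_pos (hu_pos g) (hρ_pos g))]
    have h4 : (d i)^2 * ((ε + ∑ j, (d j * g j)^2) - (d i)^2 * (g i)^2)
        ≤ (d i)^2 * (ε + ∑ j, (d j * g j)^2) := by nlinarith [sq_nonneg (d i)]
    have h5 : (Real.sqrt ε)⁻¹ * Real.sqrt (ε + ∑ j, (d j * g j)^2) ≥ 1 := by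
      rw [ge_iff_le, ← inv_mul_cancel₀ (ne_of_gt (Real.sqrt_pos.2 hε))]
      exact mul_le_mul_of_nonneg_left (hsqe_ρ g) (inv_nonneg.2 (Real.sqrt_nonneg ε))
    nlinarith [hu_pos g, sq_nonneg (d i), mul_nonneg (sq_nonneg (d i)) (hu_pos g).le,
      inv_nonneg.2 (Real.sqrt_nonneg ε)]
  have hpt : ∀ g : Fin (n+1) → ℝ,
      Real.sqrt (ε + ∑ i, (d i * g i)^2)
        = ε * (Real.sqrt (ε + ∑ i, (d i * g i)^2))⁻¹
          + ∑ i, (d i)^2 * (g i)^2 / Real.sqrt (ε + ∑ j, (d j * g j)^2) := by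
    intro g
    have h1 : ∑ i, (d i)^2 * (g i)^2 / Real.sqrt (ε + ∑ j, (d j * g j)^2)
        = (∑ i, (d i * g i)^2) / Real.sqrt (ε + ∑ j, (d j * g j)^2) := by
      rw [Finset.sum_div]
      apply Finset.sum_congr rfl
      intro j _
      rw [mul_pow]
    rw [h1]
    have hne := ne_of_gt (hρ_pos g)
    have h2 := hρ_sq g
    field_simp
    exact Real.sq_sqrt (by positivity)
  -- notation
  have hstep1 : ∫ g : Fin (n+1) → ℝ, Real.sqrt (ε + ∑ i, (d i * g i)^2)
        ∂(Measure.pi fun _ => gaussianReal 0 1)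
      = ε * (∫ g : Fin (n+1) → ℝ, (Real.sqrt (ε + ∑ i, (d i * g i)^2))⁻¹
            ∂(Measure.pi fun _ => gaussianReal 0 1))
        + ∑ i : Fin (n+1), ∫ g : Fin (n+1) → ℝ,
            (d i)^2 * (g i)^2 / Real.sqrt (ε + ∑ j, (d j * g j)^2)
            ∂(Measure.pi fun _ => gaussianReal 0 1) := by
    calc ∫ g : Fin (n+1) → ℝ, Real.sqrt (ε + ∑ i, (d i * g i)^2)
          ∂(Measure.pi fun _ => gaussianReal 0 1)
        = ∫ g : Fin (n+1) → ℝ, (ε * (Real.sqrt (ε + ∑ i, (d i * g i)^2))⁻¹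
            + ∑ i, (d i)^2 * (g i)^2 / Real.sqrt (ε + ∑ j, (d j * g j)^2))
            ∂(Measure.pi fun _ => gaussianReal 0 1) :=
          integral_congr_ae (Filter.Eventually.of_forall hpt)
      _ = (∫ g : Fin (n+1) → ℝ, ε * (Real.sqrt (ε + ∑ i, (d i * g i)^2))⁻¹
            ∂(Measure.pi fun _ => gaussianReal 0 1))
          + ∫ g : Fin (n+1) → ℝ, ∑ i, (d i)^2 * (g i)^2 / Real.sqrt (ε + ∑ j, (d j * g j)^2)
            ∂(Measure.pi fun _ => gaussianReal 0 1) :=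
          integral_add (hinv_int.const_mul ε)
            (integrable_finset_sum _ fun i _ => hf₁_int i)
      _ = _ := by
          rw [integral_const_mul, integral_finset_sum _ fun i _ => hf₁_int i]
  have hstep2 : ∀ i : Fin (n+1),
      ∫ g : Fin (n+1) → ℝ, (d i)^2 * (g i)^2 / Real.sqrt (ε + ∑ j, (d j * g j)^2)
          ∂(Measure.pi fun _ => gaussianReal 0 1)
        = ∫ g : Fin (n+1) → ℝ, (d i)^2 * ((ε + ∑ j, (d j * g j)^2) - (d i)^2 * (g i)^2)
            / ((ε + ∑ j, (d j * g j)^2) * Real.sqrt (ε + ∑ j, (d j * g j)^2))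
          ∂(Measure.pi fun _ => gaussianReal 0 1) := by
    intro i
    have h := ibp_coord d hε i
    have h1' : Integrable (fun g : Fin (n+1) → ℝ =>
        (d i)^2 * (g i)^2 / Real.sqrt (ε + ∑ j, (d j * g j)^2))
        (Measure.pi fun _ => gaussianReal 0 1) := hf₁_int i
    have h2' := hf₂_int i
    exact h h1' h2'
  have hpt2 : ∀ g : Fin (n+1) → ℝ,
      ((∑ i, d i ^ 2) - M) * (Real.sqrt (ε + ∑ i, (d i * g i)^2))⁻¹
        ≤ ∑ i, (d i)^2 * ((ε + ∑ j, (d j * g j)^2) - (d i)^2 * (g i)^2)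
            / ((ε + ∑ j, (d j * g j)^2) * Real.sqrt (ε + ∑ j, (d j * g j)^2)) := by
    intro g
    have hnum : ((∑ i, d i ^ 2) - M) * (ε + ∑ j, (d j * g j)^2)
        ≤ ∑ i, (d i)^2 * ((ε + ∑ j, (d j * g j)^2) - (d i)^2 * (g i)^2) := by
      have e1 : ∑ i, (d i)^2 * ((ε + ∑ j, (d j * g j)^2) - (d i)^2 * (g i)^2)
          = (∑ i, d i ^ 2) * (ε + ∑ j, (d j * g j)^2) - ∑ i, (d i)^2 * ((d i)^2 * (g i)^2) := by
        simp only [mul_sub]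
        rw [Finset.sum_sub_distrib, ← Finset.sum_mul]
      have e2 : ∑ i, (d i)^2 * ((d i)^2 * (g i)^2) ≤ M * ∑ i, (d i * g i)^2 := by
        rw [Finset.mul_sum]
        apply Finset.sum_le_sum
        intro i _
        have : (d i)^2 * ((d i)^2 * (g i)^2) = (d i)^2 * (d i * g i)^2 := by ring
        rw [this]
        exact mul_le_mul_of_nonneg_right (hM i) (sq_nonneg _)
      have e3 : M * ∑ i, (d i * g i)^2 ≤ M * (ε + ∑ i, (d i * g i)^2) := by
        apply mul_le_mul_of_nonneg_left _ hM0
        exact le_add_of_nonneg_left hε.le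
      nlinarith
    have hd : (0:ℝ) < (ε + ∑ j, (d j * g j)^2) * Real.sqrt (ε + ∑ j, (d j * g j)^2) :=
      mul_pos (hu_pos g) (hρ_pos g)
    have e4 : ∑ i, (d i)^2 * ((ε + ∑ j, (d j * g j)^2) - (d i)^2 * (g i)^2)
          / ((ε + ∑ j, (d j * g j)^2) * Real.sqrt (ε + ∑ j, (d j * g j)^2))
        = (∑ i, (d i)^2 * ((ε + ∑ j, (d j * g j)^2) - (d i)^2 * (g i)^2))
          / ((ε + ∑ j, (d j * g j)^2) * Real.sqrt (ε + ∑ j, (d j * g j)^2)) :=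
      (Finset.sum_div _ _ _).symm
    rw [e4, le_div_iff₀ hd]
    have e5 : ((∑ i, d i ^ 2) - M) * (Real.sqrt (ε + ∑ i, (d i * g i)^2))⁻¹
          * ((ε + ∑ j, (d j * g j)^2) * Real.sqrt (ε + ∑ j, (d j * g j)^2))
        = ((∑ i, d i ^ 2) - M) * (ε + ∑ j, (d j * g j)^2) := by
      have hne := ne_of_gt (hρ_pos g)
      field_simp
    rw [e5]
    exact hnum
  have hstep3 : ((∑ i, d i ^ 2) - M)
        * (∫ g : Fin (n+1) → ℝ, (Real.sqrt (ε + ∑ i, (d i * g i)^2))⁻¹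
            ∂(Measure.pi fun _ => gaussianReal 0 1))
      ≤ ∑ i : Fin (n+1), ∫ g : Fin (n+1) → ℝ,
          (d i)^2 * ((ε + ∑ j, (d j * g j)^2) - (d i)^2 * (g i)^2)
            / ((ε + ∑ j, (d j * g j)^2) * Real.sqrt (ε + ∑ j, (d j * g j)^2))
          ∂(Measure.pi fun _ => gaussianReal 0 1) := by
    rw [← integral_const_mul, ← integral_finset_sum _ fun i _ => hf₂_int i]
    exact integral_mono (hinv_int.const_mul _)
      (integrable_finset_sum _ fun i _ => hf₂_int i) hpt2
  -- combine: I ≥ (S - M) * J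
  have hJ_nonneg : 0 ≤ ∫ g : Fin (n+1) → ℝ, (Real.sqrt (ε + ∑ i, (d i * g i)^2))⁻¹
      ∂(Measure.pi fun _ => gaussianReal 0 1) :=
    integral_nonneg fun g => inv_nonneg.2 (hρ_pos g).le
  have hIge : ((∑ i, d i ^ 2) - M)
        * (∫ g : Fin (n+1) → ℝ, (Real.sqrt (ε + ∑ i, (d i * g i)^2))⁻¹
            ∂(Measure.pi fun _ => gaussianReal 0 1))
      ≤ ∫ g : Fin (n+1) → ℝ, Real.sqrt (ε + ∑ i, (d i * g i)^2)
          ∂(Measure.pi fun _ => gaussianReal 0 1) := by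
    rw [hstep1]
    have h1 : ∑ i : Fin (n+1), ∫ g : Fin (n+1) → ℝ,
          (d i)^2 * (g i)^2 / Real.sqrt (ε + ∑ j, (d j * g j)^2)
          ∂(Measure.pi fun _ => gaussianReal 0 1)
        = ∑ i : Fin (n+1), ∫ g : Fin (n+1) → ℝ,
          (d i)^2 * ((ε + ∑ j, (d j * g j)^2) - (d i)^2 * (g i)^2)
            / ((ε + ∑ j, (d j * g j)^2) * Real.sqrt (ε + ∑ j, (d j * g j)^2))
          ∂(Measure.pi fun _ => gaussianReal 0 1) :=
      Finset.sum_congr rfl fun i _ => hstep2 i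
    rw [h1]
    nlinarith [hstep3, mul_nonneg hε.le hJ_nonneg]
  -- AM-GM : 1 ≤ I * J
  have hI_pos : 0 < ∫ g : Fin (n+1) → ℝ, Real.sqrt (ε + ∑ i, (d i * g i)^2)
      ∂(Measure.pi fun _ => gaussianReal 0 1) := by
    have h1 : Real.sqrt ε
        = ∫ _ : Fin (n+1) → ℝ, Real.sqrt ε ∂(Measure.pi fun _ => gaussianReal 0 1) := by
      rw [integral_const]
      simp [measure_univ]
    have h2 : ∫ _ : Fin (n+1) → ℝ, Real.sqrt ε ∂(Measure.pi fun _ => gaussianReal 0 1)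
        ≤ ∫ g : Fin (n+1) → ℝ, Real.sqrt (ε + ∑ i, (d i * g i)^2)
          ∂(Measure.pi fun _ => gaussianReal 0 1) :=
      integral_mono (integrable_const _) hρ_int hsqe_ρ
    have h3 : (0:ℝ) < Real.sqrt ε := Real.sqrt_pos.2 hε
    linarith [h1 ▸ h2]
  have hJ_pos : 0 < ∫ g : Fin (n+1) → ℝ, (Real.sqrt (ε + ∑ i, (d i * g i)^2))⁻¹
      ∂(Measure.pi fun _ => gaussianReal 0 1) := by
    rw [integral_pos_iff_support_of_nonneg (fun g => inv_nonneg.2 (hρ_pos g).le) hinv_int]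
    have : Function.support (fun g : Fin (n+1) → ℝ =>
        (Real.sqrt (ε + ∑ i, (d i * g i)^2))⁻¹) = Set.univ := by
      ext g
      simp only [Function.mem_support, Set.mem_univ, iff_true]
      exact ne_of_gt (inv_pos.2 (hρ_pos g))
    rw [this]
    simp [measure_univ]
  set I := ∫ g : Fin (n+1) → ℝ, Real.sqrt (ε + ∑ i, (d i * g i)^2)
      ∂(Measure.pi fun _ => gaussianReal 0 1) with hI_def
  set J := ∫ g : Fin (n+1) → ℝ, (Real.sqrt (ε + ∑ i, (d i * g i)^2))⁻¹
      ∂(Measure.pi fun _ => gaussianReal 0 1) with hJ_def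
  have hIJ : 1 ≤ I * J := by
    set a := Real.sqrt I with ha_def
    set b := Real.sqrt J with hb_def
    have ha : 0 < a := Real.sqrt_pos.2 hI_pos
    have hb : 0 < b := Real.sqrt_pos.2 hJ_pos
    have ha2 : a^2 = I := Real.sq_sqrt hI_pos.le
    have hb2 : b^2 = J := Real.sq_sqrt hJ_pos.le
    have hptt : ∀ g : Fin (n+1) → ℝ, (2:ℝ)
        ≤ (b/a) * Real.sqrt (ε + ∑ i, (d i * g i)^2)
          + (a/b) * (Real.sqrt (ε + ∑ i, (d i * g i)^2))⁻¹ := by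
      intro g
      have hρ := hρ_pos g
      set t := (b/a) * Real.sqrt (ε + ∑ i, (d i * g i)^2) with ht_def
      have ht : 0 < t := mul_pos (div_pos hb ha) hρ
      have hinv_eq : (a/b) * (Real.sqrt (ε + ∑ i, (d i * g i)^2))⁻¹ = t⁻¹ := by
        rw [ht_def]
        field_simp
      rw [hinv_eq]
      have h := sq_nonneg (t - 1)
      have h2 : t * t⁻¹ = 1 := mul_inv_cancel₀ (ne_of_gt ht)
      nlinarith
    have hint : Integrable (fun g : Fin (n+1) → ℝ =>
        (b/a) * Real.sqrt (ε + ∑ i, (d i * g i)^2)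
          + (a/b) * (Real.sqrt (ε + ∑ i, (d i * g i)^2))⁻¹)
        (Measure.pi fun _ => gaussianReal 0 1) :=
      (hρ_int.const_mul _).add (hinv_int.const_mul _)
    have h2 : (2:ℝ) ≤ (b/a) * I + (a/b) * J := by
      have h3 := integral_mono (μ := Measure.pi fun _ : Fin (n+1) => gaussianReal 0 1)
        (integrable_const (2:ℝ)) hint hptt
      rw [integral_const] at h3
      simp only [measure_univ, probReal_univ, ENNReal.toReal_one, smul_eq_mul, one_mul] at h3
      rw [integral_add (hρ_int.const_mul _) (hinv_int.const_mul _),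
        integral_const_mul, integral_const_mul] at h3
      exact h3
    have h4 : (b/a) * I + (a/b) * J = 2 * (a * b) := by
      rw [← ha2, ← hb2]
      field_simp
      ring
    have h5 : 1 ≤ a * b := by nlinarith
    nlinarith
  -- conclude
  rcases le_or_gt ((∑ i, d i ^ 2) - M) 0 with hSM | hSM
  · calc Real.sqrt ((∑ i, d i ^ 2) - M) ≤ Real.sqrt 0 := Real.sqrt_le_sqrt hSM
      _ = 0 := Real.sqrt_zero
      _ ≤ I := hI_pos.le
  · have h6 : (∑ i, d i ^ 2) - M ≤ I^2 := by nlinarith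
    calc Real.sqrt ((∑ i, d i ^ 2) - M) ≤ Real.sqrt (I^2) := Real.sqrt_le_sqrt h6
      _ = I := Real.sqrt_sq hI_pos.le

end

/-- For D = diag(d) and g ~ N(0, I_k), E ‖D g‖₂ ≥ √(‖d‖₂² - ‖d‖_∞²). -/
theorem stmt14 {k : ℕ} (d : Fin k → ℝ) :
    Real.sqrt ((∑ i, d i ^ 2) - (⨆ i, |d i|) ^ 2) ≤
      ∫ g : Fin k → ℝ, Real.sqrt (∑ i, (d i * g i) ^ 2)
        ∂(Measure.pi fun _ : Fin k => gaussianReal 0 1) := by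
  cases k with
  | zero =>
      have h0 : (⨆ i : Fin 0, |d i|) = 0 := Real.iSup_of_isEmpty _
      simp [h0]
  | succ n =>
      have hbdd : BddAbove (Set.range fun i => |d i|) := Finite.bddAbove_range _
      have hM : ∀ i, d i ^ 2 ≤ (⨆ i, |d i|) ^ 2 := by
        intro i
        have h1 : |d i| ≤ ⨆ j, |d j| := le_ciSup hbdd i
        have h0 : (0:ℝ) ≤ |d i| := abs_nonneg _
        nlinarith [sq_abs (d i)]
      have hsum : ∀ g : Fin (n+1) → ℝ, 0 ≤ ∑ i, (d i * g i)^2 :=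
        fun g => Finset.sum_nonneg fun i _ => sq_nonneg _
      have hint0 : Integrable (fun g : Fin (n+1) → ℝ => Real.sqrt (∑ i, (d i * g i)^2))
          (Measure.pi fun _ => gaussianReal 0 1) :=
        (integrable_rho d le_rfl).congr (Filter.Eventually.of_forall fun g => by simp only []; rw [zero_add])
      refine le_of_forall_sub_le fun δ hδ => ?_
      have hkey := key d (ε := δ^2) (by positivity) hM
      have hptw : ∀ g : Fin (n+1) → ℝ, Real.sqrt (δ^2 + ∑ i, (d i * g i)^2)
          ≤ δ + Real.sqrt (∑ i, (d i * g i)^2) := by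
        intro g
        have h1 : δ^2 + ∑ i, (d i * g i)^2 ≤ (δ + Real.sqrt (∑ i, (d i * g i)^2))^2 := by
          nlinarith [Real.sq_sqrt (hsum g), Real.sqrt_nonneg (∑ i, (d i * g i)^2),
            mul_nonneg hδ.le (Real.sqrt_nonneg (∑ i, (d i * g i)^2))]
        calc Real.sqrt (δ^2 + ∑ i, (d i * g i)^2)
            ≤ Real.sqrt ((δ + Real.sqrt (∑ i, (d i * g i)^2))^2) := Real.sqrt_le_sqrt h1
          _ = δ + Real.sqrt (∑ i, (d i * g i)^2) := Real.sqrt_sq (by positivity)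
      have hmono : ∫ g : Fin (n+1) → ℝ, Real.sqrt (δ^2 + ∑ i, (d i * g i)^2)
            ∂(Measure.pi fun _ => gaussianReal 0 1)
          ≤ δ + ∫ g : Fin (n+1) → ℝ, Real.sqrt (∑ i, (d i * g i)^2)
            ∂(Measure.pi fun _ => gaussianReal 0 1) := by
        calc ∫ g : Fin (n+1) → ℝ, Real.sqrt (δ^2 + ∑ i, (d i * g i)^2)
              ∂(Measure.pi fun _ => gaussianReal 0 1)
            ≤ ∫ g : Fin (n+1) → ℝ, (δ + Real.sqrt (∑ i, (d i * g i)^2))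
              ∂(Measure.pi fun _ => gaussianReal 0 1) :=
              integral_mono (integrable_rho d (by positivity))
                ((integrable_const δ).add hint0) hptw
          _ = δ + ∫ g : Fin (n+1) → ℝ, Real.sqrt (∑ i, (d i * g i)^2)
              ∂(Measure.pi fun _ => gaussianReal 0 1) := by
              rw [integral_add (integrable_const δ) hint0, integral_const]
              simp [measure_univ]
      linarith [hkey, hmono]
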